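/- The infinite Fibonacci word f is mirror invariant: for every factor x of f, the reversal x^R is also a factor of f. -/
import Mathlib


/-- The Fibonacci morphism φ: 0 ↦ 01, 1 ↦ 0. -/
def fibPhi (w : List ℕ) : List ℕ := (w.map (fun c => if c = 0 then [0, 1] else [0])).flatten

/-- The infinite Fibonacci word f = 0100101001001⋯, the fixed point of φ starting with 0. -/
def fibWord (i : ℕ) : ℕ := ((fibPhi^[i + 2]) [0]).getD i 0

/-- A finite word is a factor of the infinite Fibonacci word. -/
def IsFibFactor (x : List ℕ) : Prop :=
  ∃ i : ℕ, x = (List.range x.length).map (fun t => fibWord (i + t))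

/-- Finite Fibonacci words. -/
def fibA (n : ℕ) : List ℕ := fibPhi^[n] [0]

lemma fibPhi_append (u v : List ℕ) : fibPhi (u ++ v) = fibPhi u ++ fibPhi v := by
  simp [fibPhi]

lemma fibA_one : fibA 1 = [0,1] := rfl
lemma fibA_two : fibA 2 = [0,1,0] := rfl

lemma fibA_succ (n : ℕ) : fibA (n+1) = fibPhi (fibA n) := Function.iterate_succ_apply' _ _ _

lemma fibA_add2 (n : ℕ) : fibA (n+2) = fibA (n+1) ++ fibA n := by
  induction n with
  | zero => rfl
  | succ n ih =>
    calc fibA (n+3) = fibPhi (fibA (n+2)) := fibA_succ _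
    _ = fibPhi (fibA (n+1) ++ fibA n) := by rw [ih]
    _ = fibA (n+2) ++ fibA (n+1) := by rw [fibPhi_append, ← fibA_succ, ← fibA_succ]

lemma fibA_len (n : ℕ) : n + 1 ≤ (fibA n).length := by
  induction n using Nat.strong_induction_on with
  | _ n ih =>
    match n with
    | 0 => simp [fibA]
    | 1 => simp [fibA_one]
    | (n+2) =>
      rw [fibA_add2, List.length_append]
      have h1 := ih (n+1) (by omega)
      have h2 := ih n (by omega)
      omega

lemma fibA_prefix_succ (n : ℕ) : fibA n <+: fibA (n+1) := by
  match n with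
  | 0 => exact ⟨[1], rfl⟩
  | (n+1) => rw [fibA_add2]; exact List.prefix_append _ _

lemma fibA_prefix {m n : ℕ} (h : m ≤ n) : fibA m <+: fibA n := by
  induction n with
  | zero => simp_all
  | succ n ih =>
    rcases Nat.lt_or_ge m (n+1) with h' | h'
    · exact (ih (by omega)).trans (fibA_prefix_succ n)
    · have : m = n+1 := by omega
      subst this; exact List.prefix_refl _

lemma fibWord_eq (m k : ℕ) (h : k < (fibA m).length) : fibWord k = (fibA m)[k] := by
  have hk : k < (fibA (k+2)).length := by have := fibA_len (k+2); omega
  rcases Nat.le_total m (k+2) with h' | h'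
  · have hp := fibA_prefix h'
    rw [fibWord, show (fibPhi^[k+2]) [0] = fibA (k+2) from rfl,
      List.getD_eq_getElem _ _ hk]
    exact (hp.getElem h).symm
  · have hp := fibA_prefix h'
    rw [fibWord, show (fibPhi^[k+2]) [0] = fibA (k+2) from rfl,
      List.getD_eq_getElem _ _ hk]
    exact hp.getElem hk

lemma slice_eq (m i k : ℕ) (h : i + k ≤ (fibA m).length) :
    (List.range k).map (fun t => fibWord (i+t)) = ((fibA m).drop i).take k := by
  apply List.ext_getElem
  · simp; omega
  · intro t h1 h2
    simp only [List.getElem_map, List.getElem_range, List.getElem_take, List.getElem_drop]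
    exact fibWord_eq m (i+t) (by simp at h2; omega)

lemma isFactor_of_infix {x : List ℕ} {m : ℕ} (h : x <:+: fibA m) : IsFibFactor x := by
  obtain ⟨u, v, huv⟩ := h
  refine ⟨u.length, ?_⟩
  have hlen : u.length + x.length ≤ (fibA m).length := by
    rw [← huv]; simp
  rw [slice_eq m u.length x.length hlen, ← huv]
  rw [List.append_assoc, List.drop_left, List.take_left]

lemma infix_of_isFactor {x : List ℕ} (h : IsFibFactor x) : ∃ m, x <:+: fibA m := by
  obtain ⟨i, hx⟩ := h
  set k := x.length with hk
  have hlen : i + k ≤ (fibA (i + k)).length := by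
    have := fibA_len (i + k); omega
  have hx' : x = ((fibA (i+k)).drop i).take k := by
    rw [hx]; exact slice_eq _ _ _ hlen
  refine ⟨i + k, ?_⟩
  rw [hx']
  exact ⟨(fibA (i + k)).take i, ((fibA (i + k)).drop i).drop k,
    by rw [List.append_assoc, List.take_append_drop, List.take_append_drop]⟩

/-- The palindromic prefix: A n with its last two letters removed. -/
def fibP (n : ℕ) : List ℕ := (fibA n).dropLast.dropLast

/-- The last two letters of A n (n ≥ 1). -/
def fibT (n : ℕ) : List ℕ := if n % 2 = 1 then [0,1] else [1,0]

lemma fibT_add2 (n : ℕ) : fibT (n+2) = fibT n := by simp [fibT, Nat.add_mod]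

lemma fibT_rev (n : ℕ) : (fibT n).reverse = fibT (n+1) := by
  rcases Nat.mod_two_eq_zero_or_one n with h | h <;>
    simp [fibT, h, Nat.add_mod]

lemma fibT_pair (n : ℕ) : ∃ a b, fibT n = [a,b] := by
  unfold fibT; split <;> exact ⟨_, _, rfl⟩

lemma dropLast2 (w : List ℕ) (a b : ℕ) : (w ++ [a,b]).dropLast.dropLast = w := by
  have : w ++ [a,b] = (w ++ [a]) ++ [b] := by simp
  rw [this, List.dropLast_concat, List.dropLast_concat]

lemma fibA_decomp (n : ℕ) : fibA (n+1) = fibP (n+1) ++ fibT (n+1) := by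
  induction n using Nat.strong_induction_on with
  | _ n ih =>
    match n with
    | 0 => simp [fibA_one, fibP, fibA_one, fibT]
    | 1 => simp [fibA_two, fibP, fibT]
    | (n+2) =>
      have h := ih n (by omega)
      have key : fibA (n+3) = (fibA (n+2) ++ fibP (n+1)) ++ fibT (n+1) := by
        rw [show n+3 = (n+1)+2 from rfl, fibA_add2, h, List.append_assoc]
      have hp3 : fibP (n+3) = fibA (n+2) ++ fibP (n+1) := by
        obtain ⟨a, b, hab⟩ := fibT_pair (n+1)
        rw [fibP, key, hab, dropLast2]
      rw [show n+2+1 = n+3 from rfl, key, hp3, show n+3 = (n+1)+2 from rfl, fibT_add2]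

lemma fibP_add3 (n : ℕ) : fibP (n+3) = fibA (n+2) ++ fibP (n+1) := by
  obtain ⟨a, b, hab⟩ := fibT_pair (n+1)
  have key : fibA (n+3) = (fibA (n+2) ++ fibP (n+1)) ++ fibT (n+1) := by
    rw [show n+3 = (n+1)+2 from rfl, fibA_add2, fibA_decomp n, List.append_assoc]
  rw [fibP, key, hab, dropLast2]

lemma fibS (n : ℕ) : fibA (n+2) ++ fibP (n+1) = fibA (n+1) ++ fibP (n+2) := by
  induction n with
  | zero => rw [fibA_two, fibA_one]; rfl
  | succ n ih =>
    calc fibA (n+3) ++ fibP (n+2) = fibA (n+2) ++ (fibA (n+1) ++ fibP (n+2)) := by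
          rw [show n+3 = (n+1)+2 from rfl, fibA_add2, List.append_assoc]
    _ = fibA (n+2) ++ (fibA (n+2) ++ fibP (n+1)) := by rw [← ih]
    _ = fibA (n+2) ++ fibP (n+3) := by rw [fibP_add3]

lemma fibP_add3' (n : ℕ) : fibP (n+3) = fibA (n+1) ++ fibP (n+2) := by
  rw [fibP_add3, fibS]

lemma fibP_pal (n : ℕ) : (fibP n).reverse = fibP n := by
  induction n using Nat.strong_induction_on with
  | _ n ih =>
    match n with
    | 0 => rfl
    | 1 => rfl
    | 2 => simp [fibP, fibA_two]
    | (n+3) =>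
      have h1 := ih (n+1) (by omega)
      have h2 := ih (n+2) (by omega)
      have hq : fibP (n+3) = fibP (n+2) ++ (fibT (n+2) ++ fibP (n+1)) := by
        rw [fibP_add3, fibA_decomp (n+1), List.append_assoc]
      rw [hq]
      simp only [List.reverse_append, h1, h2]
      rw [fibT_rev, show fibT (n+2+1) = fibT (n+1) from fibT_add2 (n+1),
        ← List.append_assoc, ← fibA_decomp n, ← fibP_add3', hq, List.append_assoc]

/-- The Fibonacci word is mirror invariant: the reversal of any factor is a factor. -/
theorem fibWord_mirror_invariant :
    ∀ x : List ℕ, IsFibFactor x → IsFibFactor x.reverse := by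
  intro x hx
  obtain ⟨m, hm⟩ := infix_of_isFactor hx
  have hAP : fibA m <+: fibP (m+3) := by
    rw [fibP_add3]
    exact (fibA_prefix (by omega : m ≤ m+2)).trans (List.prefix_append _ _)
  have h1 : x <:+: fibP (m+3) := hm.trans hAP.isInfix
  have h2 : x.reverse <:+: fibP (m+3) := by
    rw [← fibP_pal]; exact h1.reverse
  have h3 : fibP (m+3) <+: fibA (m+3) :=
    (List.dropLast_prefix _).trans (List.dropLast_prefix _)
  exact isFactor_of_infix (h2.trans h3.isInfix)
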